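/- In the setting of the previous statement (Q = coker(φ^∨) for φ : M → N a map of finite free R-modules), under the natural bijection Hom_A(Q ⊗_R A, A) ≅ ker(φ ⊗_R A), a homomorphism Q ⊗_R A → A is surjective if and only if the corresponding element of ker(φ ⊗_R A) ⊆ M ⊗_R A has nonzero image in M ⊗_R κ(p) for every prime ideal p of A. -/

import Mathlib

open TensorProduct

/-- The residue field `κ(p)` of a commutative ring at a prime ideal `p`. -/
abbrev ResidueFieldAt {A : Type} [CommRing A] (p : Ideal A) [p.IsPrime] : Type :=
  IsLocalRing.ResidueField (Localization.AtPrime p)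

/-- The evaluation pairing: a functional `ξ : M → R` induces, for any `R`-algebra `A`,
a map `M ⊗_R A → A` (written with the algebra factor on the left). -/
noncomputable def evalPairing (R A M : Type) [CommRing R] [CommRing A] [Algebra R A]
    [AddCommGroup M] [Module R M] (ξ : Module.Dual R M) : (A ⊗[R] M) →ₗ[R] A :=
  TensorProduct.lift ((LinearMap.mul R A).compl₂ ((Algebra.linearMap R A) ∘ₗ ξ))

/-- The `R`-linear residue map `A → κ(p)` at a prime `p` of an `R`-algebra `A`. -/
noncomputable def residueLinearMap {R A : Type} [CommRing R] [CommRing A] [Algebra R A]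
    (p : Ideal A) [p.IsPrime] : A →ₗ[R] ResidueFieldAt p :=
  (IsScalarTower.toAlgHom R A (ResidueFieldAt p)).toLinearMap

section Aux
variable {R A M : Type} [CommRing R] [CommRing A] [Algebra R A]
  [AddCommGroup M] [Module R M]

lemma evalPairing_tmul (ξ : Module.Dual R M) (a : A) (m : M) :
    evalPairing R A M ξ (a ⊗ₜ[R] m) = a * algebraMap R A (ξ m) := by
  simp [evalPairing]

lemma repr_eq {ι : Type} [Fintype ι] (b : Module.Basis ι R M) (x : A ⊗[R] M) :
    x = ∑ i, (evalPairing R A M (b.coord i) x) ⊗ₜ[R] b i := by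
  have h : (LinearMap.id : A ⊗[R] M →ₗ[R] A ⊗[R] M)
      = ∑ i, (TensorProduct.mk R A M).flip (b i) ∘ₗ evalPairing R A M (b.coord i) := by
    apply TensorProduct.ext'
    intro a m
    simp only [LinearMap.id_apply, LinearMap.sum_apply, LinearMap.comp_apply,
      LinearMap.flip_apply, TensorProduct.mk_apply, evalPairing_tmul]
    have : ∀ i, (a * algebraMap R A (b.coord i m)) ⊗ₜ[R] b i
        = a ⊗ₜ[R] (b.coord i m • b i) := by
      intro i
      rw [mul_comm, ← Algebra.smul_def, smul_tmul]
    simp_rw [this, ← tmul_sum]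
    congr 1
    simpa using (b.sum_repr m).symm
  conv_lhs => rw [← LinearMap.id_apply (R := R) x, h]
  simp

lemma eq_zero_iff_coords {ι : Type} [Fintype ι] (b : Module.Basis ι R M) (x : A ⊗[R] M) :
    x = 0 ↔ ∀ i, evalPairing R A M (b.coord i) x = 0 := by
  constructor
  · rintro rfl i; simp
  · intro h
    rw [repr_eq b x]
    simp [h]

lemma evalPairing_rTensor {K : Type} [CommRing K] [Algebra R K] (g : A →ₐ[R] K)
    (ξ : Module.Dual R M) (x : A ⊗[R] M) :
    evalPairing R K M ξ (LinearMap.rTensor M g.toLinearMap x)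
      = g (evalPairing R A M ξ x) := by
  have h : evalPairing R K M ξ ∘ₗ LinearMap.rTensor M g.toLinearMap
      = g.toLinearMap ∘ₗ evalPairing R A M ξ := by
    apply TensorProduct.ext'
    intro a m
    simp [evalPairing_tmul, AlgHom.commutes, _root_.map_mul,
      ← IsScalarTower.algebraMap_apply]
  exact LinearMap.congr_fun h x

lemma residueLinearMap_eq_zero_iff (p : Ideal A) [p.IsPrime] (a : A) :
    residueLinearMap (R := R) p a = 0 ↔ a ∈ p := by
  have h1 : residueLinearMap (R := R) p a
      = IsLocalRing.residue (Localization.AtPrime p) (algebraMap A (Localization.AtPrime p) a) := by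
    simp only [residueLinearMap, AlgHom.toLinearMap_apply, IsScalarTower.coe_toAlgHom',
      IsScalarTower.algebraMap_apply A (Localization.AtPrime p) (ResidueFieldAt p)]
    rfl
  rw [h1]
  rw [IsLocalRing.residue]
  exact Ideal.Quotient.eq_zero_iff_mem.trans
    (IsLocalization.AtPrime.to_map_mem_maximal_iff (Localization.AtPrime p) p a)

end Aux

/-- Let `φ : M → N` be a map of finite free modules over a commutative ring `R`, let
`Q = coker(φ^∨ : N^∨ → M^∨)` and let `A` be an `R`-algebra.  Under the natural bijection
`Hom_A(Q ⊗_R A, A) ≅ ker(φ ⊗_R A)` (characterized by the evaluation pairing), a homomorphism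
`ψ : Q ⊗_R A → A` is surjective if and only if the corresponding element of
`ker(φ ⊗_R A) ⊆ M ⊗_R A` has nonzero image in `M ⊗_R κ(p)` for every prime ideal `p`
of `A`. -/
theorem surjective_iff_corresponding_element_nowhere_vanishing
    {R M N : Type} [CommRing R]
    [AddCommGroup M] [Module R M] [Module.Free R M] [Module.Finite R M]
    [AddCommGroup N] [Module R N] [Module.Free R N] [Module.Finite R N]
    (φ : M →ₗ[R] N)
    (A : Type) [CommRing A] [Algebra R A]
    (e : ((A ⊗[R] (Module.Dual R M ⧸ LinearMap.range φ.dualMap)) →ₗ[A] A) ≃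
          LinearMap.ker (LinearMap.baseChange A φ))
    (he : ∀ (ψ : (A ⊗[R] (Module.Dual R M ⧸ LinearMap.range φ.dualMap)) →ₗ[A] A)
        (ξ : Module.Dual R M),
        ψ ((1 : A) ⊗ₜ[R] Submodule.Quotient.mk ξ) = evalPairing R A M ξ (e ψ : A ⊗[R] M))
    (ψ : (A ⊗[R] (Module.Dual R M ⧸ LinearMap.range φ.dualMap)) →ₗ[A] A) :
    Function.Surjective ψ ↔
      ∀ (p : Ideal A) [p.IsPrime],
        LinearMap.rTensor M (residueLinearMap p) (e ψ : A ⊗[R] M) ≠ 0 := by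
  set x : A ⊗[R] M := (e ψ : A ⊗[R] M) with hx
  let b := Module.Free.chooseBasis R M
  set a : Module.Free.ChooseBasisIndex R M → A :=
    fun i => evalPairing R A M (b.coord i) x with ha
  -- Step 1: surjectivity ↔ span of coordinates is ⊤
  have step1 : Function.Surjective ψ ↔ Ideal.span (Set.range a) = ⊤ := by
    rw [← LinearMap.range_eq_top (f := ψ)]
    have hrange : LinearMap.range ψ = Ideal.span (Set.range a) := by
      apply le_antisymm
      · rintro _ ⟨y, rfl⟩
        induction y using TensorProduct.induction_on with
        | zero => simp only [map_zero]; exact Submodule.zero_mem _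
        | tmul a' q =>
          obtain ⟨ξ, rfl⟩ := Submodule.Quotient.mk_surjective _ q
          have : a' ⊗ₜ[R] (Submodule.Quotient.mk ξ :
              Module.Dual R M ⧸ LinearMap.range φ.dualMap)
              = a' • ((1 : A) ⊗ₜ[R] Submodule.Quotient.mk ξ) := by
            rw [smul_tmul', smul_eq_mul, mul_one]
          rw [this, map_smul, he ψ ξ, smul_eq_mul]
          apply Ideal.mul_mem_left
          have hxrepr := repr_eq b x
          rw [← hx, hxrepr, map_sum]
          apply Submodule.sum_mem
          intro i _
          rw [evalPairing_tmul]
          exact Ideal.mul_mem_right _ _ (Ideal.subset_span ⟨i, rfl⟩)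
        | add y z hy hz => rw [map_add]; exact Submodule.add_mem _ hy hz
      · rw [Ideal.span_le]
        rintro _ ⟨i, rfl⟩
        exact ⟨(1 : A) ⊗ₜ[R] Submodule.Quotient.mk (b.coord i), he ψ (b.coord i)⟩
    rw [hrange]
  -- Step 2: vanishing at p ↔ all coordinates in p
  have step2 : ∀ (p : Ideal A) [p.IsPrime],
      LinearMap.rTensor M (residueLinearMap p) x = 0 ↔ ∀ i, a i ∈ p := by
    intro p hp
    rw [eq_zero_iff_coords b]
    refine forall_congr' fun i => ?_
    rw [residueLinearMap, evalPairing_rTensor]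
    exact residueLinearMap_eq_zero_iff (R := R) p (a i)
  rw [step1]
  constructor
  · intro htop p hp h0
    rw [step2 p] at h0
    refine hp.ne_top (top_le_iff.mp ?_)
    rw [← htop, Ideal.span_le]
    rintro _ ⟨i, rfl⟩
    exact h0 i
  · intro h
    by_contra hne
    obtain ⟨m, hm, hle⟩ := Ideal.exists_le_maximal _ hne
    have := hm.isPrime
    exact h m ((step2 m).mpr fun i => hle (Ideal.subset_span ⟨i, rfl⟩))
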